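/- Let M be a finitely generated ℤ-module and {x_a}_{a∈A} a subset of M. Then {x_a}_{a∈A} is a spanning set (respectively, a basis) of M if and only if for every field F the set {1_F ⊗ x_a}_{a∈A} is a spanning set (respectively, a basis) of the F-vector space F ⊗_ℤ M. -/

import Mathlib

open TensorProduct

lemma span_top_baseChange {M : Type} [AddCommGroup M] [Module ℤ M] {A : Type} (x : A → M)
    (hx : Submodule.span ℤ (Set.range x) = ⊤) (F : Type) [Field F] :
    Submodule.span F (Set.range fun a => (1 : F) ⊗ₜ[ℤ] x a) = ⊤ := by
  rw [eq_top_iff]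
  set S := Submodule.span F (Set.range fun a => (1 : F) ⊗ₜ[ℤ] x a) with hS
  have h1 : ∀ m : M, (1 : F) ⊗ₜ[ℤ] m ∈ S := by
    intro m
    have hle : (⊤ : Submodule ℤ M) ≤
        (S.restrictScalars ℤ).comap ((TensorProduct.mk ℤ F M) 1) := by
      rw [← hx, Submodule.span_le]
      rintro _ ⟨a, rfl⟩
      exact Submodule.subset_span ⟨a, rfl⟩
    exact hle trivial
  intro t ht
  clear ht
  induction t using TensorProduct.induction_on with
  | zero => exact S.zero_mem
  | tmul f m =>
      have := S.smul_mem f (h1 m)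
      rwa [TensorProduct.smul_tmul', smul_eq_mul, mul_one] at this
  | add u v hu hv => exact S.add_mem hu hv

lemma key (Q : Type) [AddCommGroup Q] [Module ℤ Q] [Module.Finite ℤ Q] [Nontrivial Q] :
    ∃ p : ℕ, p.Prime ∧ Nontrivial (ZMod p ⊗[ℤ] Q) := by
  -- existence of a maximal proper submodule
  haveI : IsCoatomic (Submodule ℤ Q) :=
    CompleteLattice.coatomic_of_top_compact
      ((Submodule.fg_iff_compact _).mp Module.Finite.fg_top)
  rcases eq_top_or_exists_le_coatom (⊥ : Submodule ℤ Q) with h | ⟨N, hN, -⟩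
  · exact absurd h.symm top_ne_bot
  letI : Module ℤ (Q ⧸ N) := Submodule.Quotient.module N
  haveI hsimple : IsSimpleModule ℤ (Q ⧸ N) := isSimpleModule_iff_isCoatom.mpr hN
  set m : Ideal ℤ := Module.annihilator ℤ (Q ⧸ N) with hm
  haveI hmax : m.IsMaximal :=
    IsSimpleModule.annihilator_isMaximal (R := ℤ) (M := Q ⧸ N) (simple := hsimple)
  obtain ⟨a, ha⟩ : Submodule.IsPrincipal m := inferInstance
  have ha' : m = Ideal.span {a} := ha
  clear ha
  have ha0 : a ≠ 0 := by
    rintro rfl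
    rw [Set.singleton_zero, Ideal.span_zero] at ha'
    have h2 : (⊥ : Ideal ℤ) < Ideal.span {(2 : ℤ)} := by
      rw [bot_lt_iff_ne_bot, Ne, Ideal.span_singleton_eq_bot]
      norm_num
    have := hmax.1.2 _ (ha' ▸ h2)
    rw [Ideal.span_singleton_eq_top, Int.isUnit_iff] at this
    omega
  have hap : Prime a := by
    rw [← Ideal.span_singleton_prime ha0, ← ha']
    exact hmax.isPrime
  set p : ℕ := a.natAbs with hp
  have hpp : p.Prime := Int.prime_iff_natAbs_prime.mp hap
  refine ⟨p, hpp, ?_⟩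
  have hpm : ((p : ℤ)) ∈ Module.annihilator ℤ (Q ⧸ N) := by
    rw [← hm, ha']
    exact Ideal.mem_span_singleton.mpr (Int.dvd_natAbs.mpr dvd_rfl)
  -- build a linear map ZMod p ⊗ Q →ₗ Q ⧸ N
  letI : Module ℤ (Q →ₗ[ℤ] Q ⧸ N) := @LinearMap.module ℤ ℤ ℤ Q (Q ⧸ N) _ _ _ _ _ _ _ _ _
    (by
      refine @SMulCommClass.mk ℤ ℤ (Q ⧸ N) (Submodule.Quotient.module N).toSMul
        (Submodule.Quotient.module N).toSMul ?_
      intro a b c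
      have h1 := @smul_smul ℤ (Q ⧸ N) _ (Submodule.Quotient.module N).toMulAction a b c
      have h2 := @smul_smul ℤ (Q ⧸ N) _ (Submodule.Quotient.module N).toMulAction b a c
      rw [mul_comm] at h2
      exact h1.trans h2.symm)
  let b0 : ℤ →ₗ[ℤ] Q →ₗ[ℤ] Q ⧸ N := LinearMap.toSpanSingleton ℤ (Q →ₗ[ℤ] Q ⧸ N) N.mkQ
  have hker : Ideal.span {((p : ℤ))} ≤ LinearMap.ker b0 := by
    rw [Ideal.span_le]
    rintro _ rfl
    rw [SetLike.mem_coe, LinearMap.mem_ker]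
    ext q
    simp only [b0, LinearMap.toSpanSingleton_apply, LinearMap.smul_apply, LinearMap.zero_apply]
    exact Module.mem_annihilator.mp hpm (N.mkQ q)
  let bAdd : ZMod p →+ (Q →ₗ[ℤ] Q ⧸ N) :=
    ((Submodule.liftQ (Ideal.span {((p : ℤ))}) b0 hker).toAddMonoidHom.comp
      (Int.quotientSpanNatEquivZMod p).symm.toAddMonoidHom)
  let b : ZMod p →ₗ[ℤ] Q →ₗ[ℤ] Q ⧸ N :=
    { toFun := bAdd
      map_add' := bAdd.map_add
      map_smul' := fun z c => by
        exact (map_zsmul bAdd z c).trans (Int.cast_smul_eq_zsmul ℤ z (bAdd c)).symm }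
  let φ : (ZMod p ⊗[ℤ] Q) →ₗ[ℤ] Q ⧸ N := TensorProduct.lift b
  have hφ : ∀ q : Q, φ ((1 : ZMod p) ⊗ₜ[ℤ] q) = N.mkQ q := by
    intro q
    have h0 : φ ((1 : ZMod p) ⊗ₜ[ℤ] q) = b 1 q := TensorProduct.lift.tmul _ _
    rw [h0]
    have he1 : (Int.quotientSpanNatEquivZMod p).symm (1 : ZMod p)
        = Submodule.Quotient.mk (1 : ℤ) := by
      rw [map_one]
      rfl
    show (Submodule.liftQ (Ideal.span {((p : ℤ))}) b0 hker)
      ((Int.quotientSpanNatEquivZMod p).symm 1) q = N.mkQ q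
    rw [he1]
    show b0 1 q = N.mkQ q
    simp [b0]
    exact @one_smul _ _ _ (Submodule.Quotient.module N).toMulAction _
  by_contra hns
  rw [not_nontrivial_iff_subsingleton] at hns
  haveI : Nontrivial (Q ⧸ N) := IsSimpleModule.nontrivial ℤ (Q ⧸ N)
  obtain ⟨u, v, huv⟩ := exists_pair_ne (Q ⧸ N)
  obtain ⟨qu, rfl⟩ := N.mkQ_surjective u
  obtain ⟨qv, rfl⟩ := N.mkQ_surjective v
  exact huv (by rw [← hφ, ← hφ, Subsingleton.elim ((1 : ZMod p) ⊗ₜ[ℤ] qu) ((1 : ZMod p) ⊗ₜ[ℤ] qv)])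

/-- Let `M` be a finitely generated `ℤ`-module and `{x_a}_{a ∈ A}` a
subset of `M`.  Then `{x_a}` is a spanning set (resp. a basis) of `M` if and only if for
every field `F` the set `{1_F ⊗ x_a}` is a spanning set (resp. a basis) of `F ⊗_ℤ M`. -/
theorem stmt_0 (M : Type) [AddCommGroup M] [Module ℤ M] [Module.Finite ℤ M]
    {A : Type} (x : A → M) :
    (Submodule.span ℤ (Set.range x) = ⊤ ↔
      ∀ (F : Type) [Field F],
        Submodule.span F (Set.range fun a => (1 : F) ⊗ₜ[ℤ] x a) = ⊤) ∧
    ((LinearIndependent ℤ x ∧ Submodule.span ℤ (Set.range x) = ⊤) ↔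
      ∀ (F : Type) [Field F],
        LinearIndependent F (fun a => (1 : F) ⊗ₜ[ℤ] x a) ∧
        Submodule.span F (Set.range fun a => (1 : F) ⊗ₜ[ℤ] x a) = ⊤) := by
  have part1 : Submodule.span ℤ (Set.range x) = ⊤ ↔
      ∀ (F : Type) [Field F],
        Submodule.span F (Set.range fun a => (1 : F) ⊗ₜ[ℤ] x a) = ⊤ := by
    constructor
    · intro hx F _
      exact span_top_baseChange x hx F
    · intro h
      by_contra hN
      set N := Submodule.span ℤ (Set.range x) with hNdef
      letI : Module ℤ (M ⧸ N) := Submodule.Quotient.module N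
      haveI : Nontrivial (M ⧸ N) :=
        Submodule.Quotient.nontrivial_iff.mpr hN
      haveI : Module.Finite ℤ (M ⧸ N) := Module.Finite.of_surjective N.mkQ N.mkQ_surjective
      obtain ⟨p, hp, hnt⟩ := key (M ⧸ N)
      haveI : Fact p.Prime := ⟨hp⟩
      have hs := h (ZMod p)
      set g := N.mkQ.baseChange (ZMod p) with hg
      have hgs : Function.Surjective g := by
        have := LinearMap.lTensor_surjective (ZMod p) (N.mkQ_surjective)
        rwa [← LinearMap.baseChange_eq_ltensor] at this
      have h2 : Submodule.map g
          (Submodule.span (ZMod p) (Set.range fun a => (1 : ZMod p) ⊗ₜ[ℤ] x a)) = ⊥ := by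
        rw [Submodule.map_span, ← le_bot_iff, Submodule.span_le]
        rintro _ ⟨_, ⟨a, rfl⟩, rfl⟩
        have hxa : N.mkQ (x a) = 0 := by
          rw [Submodule.mkQ_apply, Submodule.Quotient.mk_eq_zero]
          exact Submodule.subset_span ⟨a, rfl⟩
        simp only [SetLike.mem_coe, Submodule.mem_bot, hg, LinearMap.baseChange_tmul, hxa,
          TensorProduct.tmul_zero]
      rw [hs, Submodule.map_top, LinearMap.range_eq_top.mpr hgs] at h2
      obtain ⟨u, v, huv⟩ := hnt
      have hu : u ∈ (⊥ : Submodule (ZMod p) (ZMod p ⊗[ℤ] (M ⧸ N))) := h2 ▸ Submodule.mem_top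
      have hv : v ∈ (⊥ : Submodule (ZMod p) (ZMod p ⊗[ℤ] (M ⧸ N))) := h2 ▸ Submodule.mem_top
      rw [Submodule.mem_bot] at hu hv
      exact huv (hu.trans hv.symm)
  refine ⟨part1, ?_⟩
  constructor
  · rintro ⟨hli, hsp⟩ F _
    let b : Module.Basis A ℤ M := Module.Basis.mk hli (by rw [hsp])
    have heq : (fun a => (1 : F) ⊗ₜ[ℤ] x a) = ⇑(b.baseChange F) := by
      funext a
      rw [Module.Basis.baseChange_apply, Module.Basis.mk_apply]
    constructor
    · rw [heq]; exact (b.baseChange F).linearIndependent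
    · rw [heq]; exact (b.baseChange F).span_eq
  · intro h
    have hsp : Submodule.span ℤ (Set.range x) = ⊤ := part1.mpr fun F _ => (h F).2
    refine ⟨?_, hsp⟩
    have hq := (h ℚ).1
    have h1 : LinearIndependent ℤ (fun a => (1 : ℚ) ⊗ₜ[ℤ] x a) :=
      hq.restrict_scalars (by
        intro z w hzw
        simpa [smul_eq_mul, mul_one] using hzw)
    exact h1.of_comp ((TensorProduct.mk ℤ ℚ M) 1)
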